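/- Let s ≥ t ≥ 6. Every (s,t)-cycle contains a pivot-minor isomorphic to an (s−2, t−6)-cycle. Specifically, if v_1,…,v_s are the vertices of C_s in cyclic order and X = {v_1,…,v_t}, then (C_s ⊕ X) ∧ v_2 v_{t−1} − v_2 − v_{t−1} is isomorphic to C_{s−2} ⊕ X' where X' consists of t−6 consecutive vertices on the cycle C_{s−2}. -/

import Mathlib

open SimpleGraph

/-- The pivot toggle: pairs of vertices lying in different classes among
`N(u)∩N(v)`, `N(u)\N(v)\{v}`, `N(v)\N(u)\{u}`. -/
def pivotToggle {V : Type*} (G : SimpleGraph V) (u v a b : V) : Prop :=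
  ((G.Adj u a ∧ G.Adj v a) ∧ (G.Adj u b ∧ ¬ G.Adj v b ∧ b ≠ v)) ∨
  ((G.Adj u a ∧ G.Adj v a) ∧ (G.Adj v b ∧ ¬ G.Adj u b ∧ b ≠ u)) ∨
  ((G.Adj u a ∧ ¬ G.Adj v a ∧ a ≠ v) ∧ (G.Adj v b ∧ ¬ G.Adj u b ∧ b ≠ u)) ∨
  ((G.Adj u b ∧ G.Adj v b) ∧ (G.Adj u a ∧ ¬ G.Adj v a ∧ a ≠ v)) ∨
  ((G.Adj u b ∧ G.Adj v b) ∧ (G.Adj v a ∧ ¬ G.Adj u a ∧ a ≠ u)) ∨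
  ((G.Adj u b ∧ ¬ G.Adj v b ∧ b ≠ v) ∧ (G.Adj v a ∧ ¬ G.Adj u a ∧ a ≠ u))

/-- The graph `G ∧ uv` obtained from `G` by pivoting the edge `uv`:
complement the adjacency between the three classes pairwise and swap `u` and `v`. -/
def pivot {V : Type*} (G : SimpleGraph V) (u v : V) : SimpleGraph V :=
  letI := Classical.decEq V
  SimpleGraph.fromRel (fun x y =>
    (pivotToggle G u v (Equiv.swap u v x) (Equiv.swap u v y) ∧
      ¬ G.Adj (Equiv.swap u v x) (Equiv.swap u v y)) ∨
    (¬ pivotToggle G u v (Equiv.swap u v x) (Equiv.swap u v y) ∧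
      G.Adj (Equiv.swap u v x) (Equiv.swap u v y)))

/-- One pivot step: `H` is obtained from `G` by pivoting an edge. -/
def PivotStep {V : Type*} (G H : SimpleGraph V) : Prop :=
  ∃ u v, G.Adj u v ∧ H = pivot G u v

/-- `H` is (isomorphic to) a pivot-minor of `G`: `H` can be obtained from `G` by a
sequence of pivots and vertex deletions. -/
def IsPivotMinor {W V : Type*} (H : SimpleGraph W) (G : SimpleGraph V) : Prop :=
  ∃ G' : SimpleGraph V, Relation.ReflTransGen PivotStep G G' ∧
    ∃ S : Set V, Nonempty (H ≃g G'.induce S)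

/-- The partial complement `G ⊕ S`: complement all adjacencies within `S`. -/
def partialCompl {V : Type*} (G : SimpleGraph V) (S : Set V) : SimpleGraph V :=
  SimpleGraph.fromRel (fun x y =>
    (x ∈ S ∧ y ∈ S ∧ ¬ G.Adj x y) ∨ (¬ (x ∈ S ∧ y ∈ S) ∧ G.Adj x y))

/-- The set of `t` consecutive vertices of the cycle `C_n` starting at `a`. -/
def consec (n : ℕ) (a : Fin n) (t : ℕ) : Set (Fin n) :=
  {x : Fin n | (x - a).val < t}

namespace Stmt6Aux

/-! ### ℕ-level predicates -/

def CA (s x y : ℕ) : Prop :=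
  x + 1 = y ∨ y + 1 = x ∨ (x = 0 ∧ y + 1 = s) ∨ (y = 0 ∧ x + 1 = s)

def GA (s t x y : ℕ) : Prop :=
  x ≠ y ∧ ((x < t ∧ y < t ∧ ¬ CA s x y) ∨ (¬ (x < t ∧ y < t) ∧ CA s x y))

def Mcl (t x : ℕ) : Prop := 3 ≤ x ∧ x + 4 ≤ t
def Acl (t x : ℕ) : Prop := x + 3 = t ∨ x + 1 = t
def Bcl (x : ℕ) : Prop := x = 0 ∨ x = 2

def TOG (t x y : ℕ) : Prop :=
  (Mcl t x ∧ (Acl t y ∨ Bcl y)) ∨ (Acl t x ∧ (Mcl t y ∨ Bcl y)) ∨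
    (Bcl x ∧ (Mcl t y ∨ Acl t y))

def NADJ (s t x y : ℕ) : Prop :=
  x ≠ y ∧ ((TOG t x y ∧ ¬ GA s t x y) ∨ (¬ TOG t x y ∧ GA s t x y))

def ψn (t k : ℕ) : ℕ := if k = 0 then 0 else if k + 4 ≤ t then k + 1 else k + 2
def gn (t z : ℕ) : ℕ := if z = 0 then 0 else if z + 3 ≤ t then z - 1 else z - 2

/-! ### basic Fin lemmas -/

lemma finSubVal {n : ℕ} (x y : Fin n) :
    (x - y).val = if y.val ≤ x.val then x.val - y.val else x.val + n - y.val := by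
  have hx := x.isLt; have hy := y.isLt
  rw [Fin.sub_def]
  show (n - y.val + x.val) % n = _
  split
  · next h =>
      have e : n - y.val + x.val = (x.val - y.val) + n := by omega
      rw [e, Nat.add_mod_right, Nat.mod_eq_of_lt (by omega)]
  · next h =>
      rw [Nat.mod_eq_of_lt (by omega)]
      omega

lemma cycle_adj_iff {s : ℕ} (hs : 3 ≤ s) (x y : Fin s) :
    (cycleGraph s).Adj x y ↔ CA s x.val y.val := by
  have hx := x.isLt; have hy := y.isLt
  rw [cycleGraph_adj', finSubVal, finSubVal]
  unfold CA
  split_ifs <;> omega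

lemma pc_adj {n : ℕ} (G : SimpleGraph (Fin n)) (S : Set (Fin n)) (x y : Fin n) :
    (partialCompl G S).Adj x y ↔ x ≠ y ∧
      ((x ∈ S ∧ y ∈ S ∧ ¬ G.Adj x y) ∨ (¬ (x ∈ S ∧ y ∈ S) ∧ G.Adj x y)) := by
  unfold partialCompl
  rw [SimpleGraph.fromRel_adj]
  have h := G.adj_comm x y
  tauto

lemma mem_consec {n a t : ℕ} (ha : a < n) (x : Fin n) :
    x ∈ consec n ⟨a, ha⟩ t ↔ (if a ≤ x.val then x.val - a else x.val + n - a) < t := by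
  show (x - ⟨a, ha⟩).val < t ↔ _
  rw [finSubVal]

lemma GA_u {s t c : ℕ} (ht : 6 ≤ t) (hts : t ≤ s) (hc : c < s) :
    GA s t 1 c ↔ (3 ≤ c ∧ c < t) := by unfold GA CA; omega

lemma GA_v {s t c : ℕ} (ht : 6 ≤ t) (hts : t ≤ s) (hc : c < s) (hc2 : c ≠ t - 2) :
    GA s t (t - 2) c ↔ c + 4 ≤ t := by unfold GA CA; omega

lemma GA_symm {s t x y : ℕ} : GA s t x y ↔ GA s t y x := by unfold GA CA; omega

lemma TOG_symm {t x y : ℕ} : TOG t x y ↔ TOG t y x := by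
  unfold TOG Mcl Acl Bcl; tauto

set_option maxHeartbeats 1600000 in
lemma G0_adj {s t : ℕ} (ht : 6 ≤ t) (hts : t ≤ s) (h0 : 0 < s) (x y : Fin s) :
    (partialCompl (cycleGraph s) (consec s ⟨0, h0⟩ t)).Adj x y ↔ GA s t x.val y.val := by
  have hx := x.isLt; have hy := y.isLt
  rw [pc_adj, cycle_adj_iff (by omega), Fin.ne_iff_vne, mem_consec h0, mem_consec h0]
  unfold GA CA
  split_ifs <;> omega

lemma pivot_adj' {V : Type*} (G : SimpleGraph V) (u v x y : V)
    (hxu : x ≠ u) (hxv : x ≠ v) (hyu : y ≠ u) (hyv : y ≠ v) :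
    (pivot G u v).Adj x y ↔ x ≠ y ∧
      ((pivotToggle G u v x y ∧ ¬ G.Adj x y) ∨ (¬ pivotToggle G u v x y ∧ G.Adj x y) ∨
       (pivotToggle G u v y x ∧ ¬ G.Adj y x) ∨ (¬ pivotToggle G u v y x ∧ G.Adj y x)) := by
  letI := Classical.decEq V
  unfold pivot
  rw [SimpleGraph.fromRel_adj, Equiv.swap_apply_of_ne_of_ne hxu hxv,
    Equiv.swap_apply_of_ne_of_ne hyu hyv]
  tauto

set_option maxHeartbeats 1600000 in
lemma toggle_iff {s t : ℕ} (ht : 6 ≤ t) (hts : t ≤ s) (h0 : 0 < s) (h1 : 1 < s)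
    (h2 : t - 2 < s) (a b : Fin s)
    (ha1 : a.val ≠ 1) (ha2 : a.val ≠ t - 2) (hb1 : b.val ≠ 1) (hb2 : b.val ≠ t - 2) :
    pivotToggle (partialCompl (cycleGraph s) (consec s ⟨0, h0⟩ t)) ⟨1, h1⟩ ⟨t - 2, h2⟩ a b
      ↔ TOG t a.val b.val := by
  have hx := a.isLt; have hy := b.isLt
  unfold pivotToggle
  simp only [G0_adj ht hts h0, Fin.ne_iff_vne, Fin.val_mk]
  rw [GA_u ht hts hx, GA_u ht hts hy, GA_v ht hts hx ha2, GA_v ht hts hy hb2]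
  unfold TOG Mcl Acl Bcl
  omega

set_option maxHeartbeats 1600000 in
lemma pivot_adj_val {s t : ℕ} (ht : 6 ≤ t) (hts : t ≤ s) (h0 : 0 < s) (h1 : 1 < s)
    (h2 : t - 2 < s) (x y : Fin s)
    (hx1 : x.val ≠ 1) (hx2 : x.val ≠ t - 2) (hy1 : y.val ≠ 1) (hy2 : y.val ≠ t - 2) :
    (pivot (partialCompl (cycleGraph s) (consec s ⟨0, h0⟩ t)) ⟨1, h1⟩ ⟨t - 2, h2⟩).Adj x y ↔
      NADJ s t x.val y.val := by
  rw [pivot_adj' _ _ _ _ _ (Fin.ne_of_val_ne hx1) (Fin.ne_of_val_ne hx2)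
    (Fin.ne_of_val_ne hy1) (Fin.ne_of_val_ne hy2),
    toggle_iff ht hts h0 h1 h2 x y hx1 hx2 hy1 hy2,
    toggle_iff ht hts h0 h1 h2 y x hy1 hy2 hx1 hx2,
    G0_adj ht hts h0 x y, G0_adj ht hts h0 y x, Fin.ne_iff_vne,
    show TOG t y.val x.val ↔ TOG t x.val y.val from TOG_symm,
    show GA s t y.val x.val ↔ GA s t x.val y.val from GA_symm]
  unfold NADJ
  tauto

set_option maxHeartbeats 1600000 in
lemma small_adj {s t : ℕ} (ht : 6 ≤ t) (hts : t ≤ s) (h2' : 2 < s - 2) (x y : Fin (s - 2)) :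
    (partialCompl (cycleGraph (s - 2)) (consec (s - 2) ⟨2, h2'⟩ (t - 6))).Adj x y ↔
      x.val ≠ y.val ∧
        (((2 ≤ x.val ∧ x.val + 5 ≤ t) ∧ (2 ≤ y.val ∧ y.val + 5 ≤ t) ∧
            ¬ CA (s - 2) x.val y.val) ∨
          (¬ ((2 ≤ x.val ∧ x.val + 5 ≤ t) ∧ (2 ≤ y.val ∧ y.val + 5 ≤ t)) ∧
            CA (s - 2) x.val y.val)) := by
  have hx := x.isLt; have hy := y.isLt
  rw [pc_adj, cycle_adj_iff (by omega), Fin.ne_iff_vne, mem_consec h2', mem_consec h2']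
  unfold CA
  split_ifs <;> omega

set_option maxHeartbeats 1600000 in
lemma crown {s t : ℕ} (ht : 6 ≤ t) (hts : t ≤ s) {x y : ℕ} (hx : x < s - 2) (hy : y < s - 2) :
    NADJ s t (ψn t x) (ψn t y) ↔
      x ≠ y ∧
        (((2 ≤ x ∧ x + 5 ≤ t) ∧ (2 ≤ y ∧ y + 5 ≤ t) ∧ ¬ CA (s - 2) x y) ∨
          (¬ ((2 ≤ x ∧ x + 5 ≤ t) ∧ (2 ≤ y ∧ y + 5 ≤ t)) ∧ CA (s - 2) x y)) := by
  unfold NADJ TOG GA CA Mcl Acl Bcl ψn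
  split_ifs <;>
    first
      | exact False.elim (by assumption)
      | (simp only [false_or, or_false, false_and, and_false, true_and, and_true,
          true_or, or_true, not_false_eq_true, not_true_eq_false]
         omega)
      | omega

/-! ### the vertex bijection -/

lemma psn_lt {s t k : ℕ} (ht : 6 ≤ t) (hts : t ≤ s) (hk : k < s - 2) : ψn t k < s := by
  unfold ψn; split_ifs <;> first | exact False.elim (by assumption) | omega

lemma psn_ne1 {t k : ℕ} (ht : 6 ≤ t) : ψn t k ≠ 1 := by
  unfold ψn; split_ifs <;> first | exact False.elim (by assumption) | omega

lemma psn_net {t k : ℕ} (ht : 6 ≤ t) : ψn t k ≠ t - 2 := by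
  unfold ψn; split_ifs <;> first | exact False.elim (by assumption) | omega

lemma gn_lt {s t z : ℕ} (ht : 6 ≤ t) (hts : t ≤ s) (hz : z < s) (hz1 : z ≠ 1)
    (hz2 : z ≠ t - 2) : gn t z < s - 2 := by
  unfold gn; split_ifs <;> first | exact False.elim (by assumption) | omega

lemma gn_psn {t k : ℕ} (ht : 6 ≤ t) : gn t (ψn t k) = k := by
  unfold ψn gn; split_ifs <;> first | exact False.elim (by assumption) | omega

lemma psn_gn {t z : ℕ} (ht : 6 ≤ t) (hz1 : z ≠ 1) (hz2 : z ≠ t - 2) : ψn t (gn t z) = z := by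
  unfold ψn gn; split_ifs <;> first | exact False.elim (by assumption) | omega

def theEquiv {s t : ℕ} (ht : 6 ≤ t) (hts : t ≤ s) :
    Fin (s - 2) ≃ ↥{z : Fin s | z.val ≠ 1 ∧ z.val ≠ t - 2} where
  toFun k := ⟨⟨ψn t k.val, psn_lt ht hts k.isLt⟩, psn_ne1 ht, psn_net ht⟩
  invFun z := ⟨gn t z.1.val, gn_lt ht hts z.1.isLt z.2.1 z.2.2⟩
  left_inv k := Fin.ext (gn_psn ht)
  right_inv z := Subtype.ext (Fin.ext (psn_gn ht z.2.1 z.2.2))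

def theIso {s t : ℕ} (ht : 6 ≤ t) (hts : t ≤ s) (h0 : 0 < s) (h1 : 1 < s)
    (h2 : t - 2 < s) (h2' : 2 < s - 2) :
    (partialCompl (cycleGraph (s - 2)) (consec (s - 2) ⟨2, h2'⟩ (t - 6))) ≃g
      ((pivot (partialCompl (cycleGraph s) (consec s ⟨0, h0⟩ t)) ⟨1, h1⟩
          ⟨t - 2, h2⟩).induce {z : Fin s | z.val ≠ 1 ∧ z.val ≠ t - 2}) where
  toEquiv := theEquiv ht hts
  map_rel_iff' := by
    intro x y
    show (pivot (partialCompl (cycleGraph s) (consec s ⟨0, h0⟩ t)) ⟨1, h1⟩ ⟨t - 2, h2⟩).Adj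
        ⟨ψn t x.val, psn_lt ht hts x.isLt⟩ ⟨ψn t y.val, psn_lt ht hts y.isLt⟩ ↔ _
    rw [pivot_adj_val ht hts h0 h1 h2 _ _ (psn_ne1 ht) (psn_net ht) (psn_ne1 ht) (psn_net ht),
      small_adj ht hts h2']
    exact crown ht hts x.isLt y.isLt

/-! ### rotation -/

lemma cycle_translate {s : ℕ} (hs : 2 ≤ s) (x y d : Fin s) :
    (cycleGraph s).Adj (x + d) (y + d) ↔ (cycleGraph s).Adj x y := by
  obtain ⟨m, rfl⟩ : ∃ m, s = m + 2 := ⟨s - 2, by omega⟩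
  rw [cycleGraph_adj, cycleGraph_adj, add_sub_add_right_eq_sub, add_sub_add_right_eq_sub]

lemma mem_translate {s t : ℕ} (h0 : 0 < s) (a x : Fin s) :
    (x + a) ∈ consec s a t ↔ x ∈ consec s ⟨0, h0⟩ t := by
  haveI : NeZero s := ⟨by omega⟩
  have h1 : x + a - a = x := add_sub_cancel_right x a
  show (x + a - a).val < t ↔ x ∈ consec s ⟨0, h0⟩ t
  rw [h1, mem_consec h0]
  split <;> omega

def rotIso {s t : ℕ} (ht : 6 ≤ t) (hts : t ≤ s) (h0 : 0 < s) (a : Fin s) :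
    (partialCompl (cycleGraph s) (consec s ⟨0, h0⟩ t)) ≃g
      (partialCompl (cycleGraph s) (consec s a t)) :=
  haveI : NeZero s := ⟨by omega⟩
  { toEquiv := Equiv.addRight a
    map_rel_iff' := by
      intro x y
      show (partialCompl (cycleGraph s) (consec s a t)).Adj (x + a) (y + a) ↔ _
      rw [pc_adj, pc_adj, cycle_translate (by omega), mem_translate h0, mem_translate h0]
      have h : x + a = y + a ↔ x = y := add_left_inj a
      tauto }

/-! ### transport along isomorphisms -/

lemma pivotToggle_comap {W V : Type*} (σ : W ≃ V) (G : SimpleGraph V) (a b x y : W) :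
    pivotToggle (G.comap σ) a b x y ↔ pivotToggle G (σ a) (σ b) (σ x) (σ y) := by
  unfold pivotToggle
  simp only [SimpleGraph.comap_adj, σ.injective.ne_iff]

lemma pivot_comap {W V : Type*} (σ : W ≃ V) (G : SimpleGraph V) (a b : W) :
    pivot (G.comap σ) a b = (pivot G (σ a) (σ b)).comap σ := by
  letI := Classical.decEq W
  letI := Classical.decEq V
  ext x y
  have key : ∀ p q : W,
      ((pivotToggle (G.comap σ) a b (Equiv.swap a b p) (Equiv.swap a b q) ∧
          ¬ (G.comap σ).Adj (Equiv.swap a b p) (Equiv.swap a b q)) ∨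
        (¬ pivotToggle (G.comap σ) a b (Equiv.swap a b p) (Equiv.swap a b q) ∧
          (G.comap σ).Adj (Equiv.swap a b p) (Equiv.swap a b q))) ↔
      ((pivotToggle G (σ a) (σ b) (Equiv.swap (σ a) (σ b) (σ p))
            (Equiv.swap (σ a) (σ b) (σ q)) ∧
          ¬ G.Adj (Equiv.swap (σ a) (σ b) (σ p)) (Equiv.swap (σ a) (σ b) (σ q))) ∨
        (¬ pivotToggle G (σ a) (σ b) (Equiv.swap (σ a) (σ b) (σ p))
            (Equiv.swap (σ a) (σ b) (σ q)) ∧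
          G.Adj (Equiv.swap (σ a) (σ b) (σ p)) (Equiv.swap (σ a) (σ b) (σ q)))) := by
    intro p q
    rw [pivotToggle_comap, SimpleGraph.comap_adj, σ.injective.map_swap,
      σ.injective.map_swap]
  show (pivot (G.comap σ) a b).Adj x y ↔ (pivot G (σ a) (σ b)).Adj (σ x) (σ y)
  unfold pivot
  rw [SimpleGraph.fromRel_adj, SimpleGraph.fromRel_adj]
  have hne : x ≠ y ↔ σ x ≠ σ y := σ.injective.ne_iff.symm
  rw [hne, key x y, key y x]

def induceComapIso {W V : Type*} (σ : W ≃ V) (G : SimpleGraph V) (S : Set V) :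
    ((G.comap σ).induce (σ ⁻¹' S)) ≃g (G.induce S) where
  toEquiv := σ.subtypeEquiv (fun _ => Iff.rfl)
  map_rel_iff' := Iff.rfl

end Stmt6Aux

open Stmt6Aux in
/-- Lemma: for `s ≥ t ≥ 6`, every `(s,t)`-cycle contains a pivot-minor isomorphic
to an `(s−2, t−6)`-cycle; specifically, `(C_s ⊕ X) ∧ v₂v_{t−1} − v₂ − v_{t−1}`
(where `X = {v₁,…,v_t}`) is isomorphic to `C_{s−2} ⊕ X'` with `X'` a set of `t−6`
consecutive vertices of `C_{s−2}`. -/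
theorem stmt_6 (s t : ℕ) (ht : 6 ≤ t) (hts : t ≤ s)
    {V : Type*} (H : SimpleGraph V)
    (hH : ∃ a : Fin s, Nonempty (H ≃g partialCompl (cycleGraph s) (consec s a t))) :
    (∃ a' : Fin (s - 2),
      IsPivotMinor (partialCompl (cycleGraph (s - 2)) (consec (s - 2) a' (t - 6))) H) ∧
    (∃ a' : Fin (s - 2),
      Nonempty (((pivot (partialCompl (cycleGraph s) (consec s ⟨0, by omega⟩ t))
          ⟨1, by omega⟩ ⟨t - 2, by omega⟩).induce
          {z : Fin s | z.val ≠ 1 ∧ z.val ≠ t - 2}) ≃g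
        partialCompl (cycleGraph (s - 2)) (consec (s - 2) a' (t - 6)))) := by
  obtain ⟨a, ⟨e⟩⟩ := hH
  have h0 : 0 < s := by omega
  have h1 : 1 < s := by omega
  have h2 : t - 2 < s := by omega
  have h2' : 2 < s - 2 := by omega
  set G0 := partialCompl (cycleGraph s) (consec s ⟨0, h0⟩ t) with hG0
  have E := theIso ht hts h0 h1 h2 h2'
  constructor
  · -- pivot-minor part
    refine ⟨⟨2, h2'⟩, ?_⟩
    set f : H ≃g G0 := e.trans (rotIso ht hts h0 a).symm with hf
    set σ : V ≃ Fin s := f.toEquiv with hσ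
    have hH0 : H = G0.comap σ := by
      ext x y
      exact (f.map_rel_iff).symm
    set u : Fin s := ⟨1, h1⟩ with hu
    set v : Fin s := ⟨t - 2, h2⟩ with hv
    have huv : G0.Adj u v :=
      (G0_adj ht hts h0 u v).mpr (show GA s t 1 (t - 2) by unfold GA CA; omega)
    refine ⟨(pivot G0 u v).comap σ, Relation.ReflTransGen.single
      ⟨σ.symm u, σ.symm v, ?_, ?_⟩,
      σ ⁻¹' {z : Fin s | z.val ≠ 1 ∧ z.val ≠ t - 2}, ?_⟩
    · rw [hH0]
      show G0.Adj (σ (σ.symm u)) (σ (σ.symm v))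
      rwa [Equiv.apply_symm_apply, Equiv.apply_symm_apply]
    · rw [hH0, pivot_comap, Equiv.apply_symm_apply, Equiv.apply_symm_apply]
    · exact ⟨E.trans (induceComapIso σ (pivot G0 u v)
        {z : Fin s | z.val ≠ 1 ∧ z.val ≠ t - 2}).symm⟩
  · exact ⟨⟨2, h2'⟩, ⟨E.symm⟩⟩
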